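/- arXiv:1202.1919 — 8 statements merged into one kernel-verified Lean document; each statement's English description precedes it below -/
import Mathlib

section
/- If γ(t) = (x(t), y(t)) is a T-periodic solution of the system ẋ = y, ẏ = -x + (1 - x²)(y + y³) whose orbit does not meet the hyperbola {xy + 1 = 0}, then ∫₀ᵀ div(X)(γ(t)) dt = ∫₀ᵀ (2x(t)² + 1) dt > 0; in particular every periodic orbit is repelling and the system has no limit cycles. -/
open intervalIntegral

/-- If γ is a T-periodic solution of ẋ = y, ẏ = -x + (1 - x²)(y + y³) whose
orbit avoids the hyperbola xy + 1 = 0, then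
∫₀ᵀ div X (γ(t)) dt = ∫₀ᵀ (2x(t)² + 1) dt > 0. -/
theorem periodic_orbit_repelling (T : ℝ) (hT : 0 < T) (γ : ℝ → ℝ × ℝ)
    (hode : ∀ t : ℝ, HasDerivAt γ
      ((γ t).2, -(γ t).1 + (1 - (γ t).1 ^ 2) * ((γ t).2 + (γ t).2 ^ 3)) t)
    (hper : ∀ t : ℝ, γ (t + T) = γ t)
    (havoid : ∀ t : ℝ, (γ t).1 * (γ t).2 + 1 ≠ 0) :
    (∫ t in (0:ℝ)..T, (1 - (γ t).1 ^ 2) * (1 + 3 * (γ t).2 ^ 2))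
      = ∫ t in (0:ℝ)..T, (2 * (γ t).1 ^ 2 + 1) ∧
    0 < ∫ t in (0:ℝ)..T, (2 * (γ t).1 ^ 2 + 1) := by
  have hγ : Continuous γ := continuous_iff_continuousAt.2 fun t => (hode t).continuousAt
  have hx : Continuous fun t => (γ t).1 := hγ.fst
  have hy : Continuous fun t => (γ t).2 := hγ.snd
  have hint1 : IntervalIntegrable (fun t => (1 - (γ t).1 ^ 2) * (1 + 3 * (γ t).2 ^ 2))
      MeasureTheory.volume 0 T := (by fun_prop : Continuous _).intervalIntegrable 0 T
  have hint2 : IntervalIntegrable (fun t => 2 * (γ t).1 ^ 2 + 1)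
      MeasureTheory.volume 0 T := (by fun_prop : Continuous _).intervalIntegrable 0 T
  have hper0 : γ T = γ 0 := by simpa using hper 0
  -- the potential function
  set φ : ℝ → ℝ := fun t => 3 * Real.log ((γ t).1 * (γ t).2 + 1) - 3 / 2 * (γ t).1 ^ 2 with hφ
  have hderiv : ∀ t : ℝ, HasDerivAt φ
      ((1 - (γ t).1 ^ 2) * (1 + 3 * (γ t).2 ^ 2) - (2 * (γ t).1 ^ 2 + 1)) t := by
    intro t
    have hxd : HasDerivAt (fun t => (γ t).1) ((γ t).2) t := (hode t).fst
    have hyd : HasDerivAt (fun t => (γ t).2)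
        (-(γ t).1 + (1 - (γ t).1 ^ 2) * ((γ t).2 + (γ t).2 ^ 3)) t := (hode t).snd
    have hF : HasDerivAt (fun t => (γ t).1 * (γ t).2 + 1)
        ((γ t).2 * (γ t).2 + (γ t).1 * (-(γ t).1 + (1 - (γ t).1 ^ 2) * ((γ t).2 + (γ t).2 ^ 3))) t :=
      (hxd.mul hyd).add_const 1
    have hlog : HasDerivAt (fun t => Real.log ((γ t).1 * (γ t).2 + 1))
        (((γ t).1 * (γ t).2 + 1)⁻¹ *
          ((γ t).2 * (γ t).2 + (γ t).1 * (-(γ t).1 + (1 - (γ t).1 ^ 2) * ((γ t).2 + (γ t).2 ^ 3)))) t :=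
      by have h1 := Real.hasDerivAt_log (havoid t); exact h1.comp t hF
    have hsq : HasDerivAt (fun t => (γ t).1 ^ 2) (2 * (γ t).1 ^ (2 - 1) * (γ t).2) t := hxd.pow 2
    have := (hlog.const_mul 3).sub (hsq.const_mul (3 / 2))
    refine this.congr_deriv ?_
    have hne := havoid t
    field_simp
    ring
  have key : (∫ t in (0:ℝ)..T,
      ((1 - (γ t).1 ^ 2) * (1 + 3 * (γ t).2 ^ 2) - (2 * (γ t).1 ^ 2 + 1))) = φ T - φ 0 := by
    apply intervalIntegral.integral_eq_sub_of_hasDerivAt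
    · exact fun t _ => hderiv t
    · exact hint1.sub hint2
  have hzero : (∫ t in (0:ℝ)..T,
      ((1 - (γ t).1 ^ 2) * (1 + 3 * (γ t).2 ^ 2) - (2 * (γ t).1 ^ 2 + 1))) = 0 := by
    rw [key, hφ]
    simp [hper0]
  have heq : (∫ t in (0:ℝ)..T, (1 - (γ t).1 ^ 2) * (1 + 3 * (γ t).2 ^ 2))
      = ∫ t in (0:ℝ)..T, (2 * (γ t).1 ^ 2 + 1) := by
    rw [intervalIntegral.integral_sub hint1 hint2] at hzero
    linarith
  refine ⟨heq, ?_⟩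
  have := intervalIntegral.intervalIntegral_pos_of_pos_on hint2
    (fun t _ => by positivity) hT
  exact this
end

section
/- For every b with 0 < b < 2/√3, the polynomial M_b(x) = 4x⁴ + b²(3b² - 4)(x² - b²) is strictly positive for all real x. -/
/-- For 0 < b < 2/√3, M_b(x) = 4x⁴ + b²(3b² - 4)(x² - b²) is strictly
positive on ℝ. -/
theorem M_b_positive (b : ℝ) (hb0 : 0 < b) (hb : b < 2 / Real.sqrt 3) :
    ∀ x : ℝ, 0 < 4 * x ^ 4 + b ^ 2 * (3 * b ^ 2 - 4) * (x ^ 2 - b ^ 2) := by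
  have hs : Real.sqrt 3 > 0 := Real.sqrt_pos.mpr (by norm_num)
  have hbs : b * Real.sqrt 3 < 2 := (lt_div_iff₀ hs).mp hb
  have hsq : Real.sqrt 3 ^ 2 = 3 := Real.sq_sqrt (by norm_num)
  have h3 : 3 * b ^ 2 < 4 := by nlinarith [mul_pos hb0 hs]
  have hb2 : 0 < b ^ 2 := pow_pos hb0 2
  have key : 0 < b ^ 2 * b ^ 2 * ((4 - 3 * b ^ 2) * (3 * b ^ 2 + 12)) := by
    apply mul_pos (mul_pos hb2 hb2)
    apply mul_pos <;> nlinarith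
  intro x
  nlinarith [sq_nonneg (8 * x ^ 2 + b ^ 2 * (3 * b ^ 2 - 4)), key]
end

section
/- For the van der Pol system ẋ = y, ẏ = -x + (b² - x²)y and V_b(x,y) = 6y² + 2(x² - 3b²)xy + 6x² + b²(3b² - 4), the expression M := (∂V_b/∂x)·y + (∂V_b/∂y)·(-x + (b² - x²)y) - V_b·div equals 4x⁴ + b²(3b² - 4)(x² - b²), where div = b² - x² is the divergence of the vector field. -/
/-- Dulac-type function for the van der Pol system. -/
noncomputable def Vvdp (b x y : ℝ) : ℝ :=
  6 * y ^ 2 + 2 * (x ^ 2 - 3 * b ^ 2) * x * y + 6 * x ^ 2 + b ^ 2 * (3 * b ^ 2 - 4)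

lemma Vvdp_dx (b x y : ℝ) :
    deriv (fun s : ℝ => Vvdp b s y) x = 2 * (3 * x ^ 2 - 3 * b ^ 2) * y + 12 * x := by
  have : (fun s : ℝ => Vvdp b s y) = fun s : ℝ =>
      6 * y ^ 2 + 2 * (s ^ 2 - 3 * b ^ 2) * s * y + 6 * s ^ 2 + b ^ 2 * (3 * b ^ 2 - 4) := by
    funext s; simp [Vvdp]
  rw [this]
  have h : HasDerivAt (fun s : ℝ =>
      6 * y ^ 2 + 2 * (s ^ 2 - 3 * b ^ 2) * s * y + 6 * s ^ 2 + b ^ 2 * (3 * b ^ 2 - 4))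
      (2 * (3 * x ^ 2 - 3 * b ^ 2) * y + 12 * x) x := by
    have hx : HasDerivAt (fun s : ℝ => s) 1 x := hasDerivAt_id x
    have := (((hx.pow 2).sub_const (3 * b ^ 2)).const_mul 2 |>.mul hx |>.mul_const y)
    have h2 := ((hx.pow 2).const_mul 6)
    have := ((this.const_add (6 * y ^ 2)).add h2).add_const (b ^ 2 * (3 * b ^ 2 - 4))
    exact this.congr_deriv (by simp only [Pi.pow_apply]; ring)
  exact h.deriv

lemma Vvdp_dy (b x y : ℝ) :
    deriv (fun s : ℝ => Vvdp b x s) y = 12 * y + 2 * (x ^ 2 - 3 * b ^ 2) * x := by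
  have h : HasDerivAt (fun s : ℝ => Vvdp b x s)
      (12 * y + 2 * (x ^ 2 - 3 * b ^ 2) * x) y := by
    have hy : HasDerivAt (fun s : ℝ => s) 1 y := hasDerivAt_id y
    have := (((hy.pow 2).const_mul 6).add (hy.const_mul (2 * (x ^ 2 - 3 * b ^ 2) * x))).add_const
      (6 * x ^ 2 + b ^ 2 * (3 * b ^ 2 - 4))
    refine (this.congr_deriv (by ring)).congr_of_eventuallyEq (Filter.Eventually.of_forall fun s => ?_)
    simp only [Vvdp, Pi.add_apply, Pi.pow_apply]; ring
  exact h.deriv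

/-- For the van der Pol system X = (y, -x + (b² - x²)y) with divergence b² - x²,
M = ⟨∇V_b, X⟩ - V_b · div X equals 4x⁴ + b²(3b² - 4)(x² - b²). -/
theorem vdp_M_identity (b x y : ℝ) :
    (deriv (fun s : ℝ => Vvdp b s y) x) * y
      + (deriv (fun s : ℝ => Vvdp b x s) y) * (-x + (b ^ 2 - x ^ 2) * y)
      - Vvdp b x y * (b ^ 2 - x ^ 2)
      = 4 * x ^ 4 + b ^ 2 * (3 * b ^ 2 - 4) * (x ^ 2 - b ^ 2) := by
  rw [Vvdp_dx, Vvdp_dy, Vvdp]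
  ring
end

section
/- Let G(x,y) be a real polynomial in two variables and write G(εᵖX, ε^qY) = ε^m G⁰(X,Y) + ε^{m+1} G¹(X,Y,ε) for all ε > 0, where p, q, m are natural numbers with gcd(p,q) = 1, G⁰ is quasi-homogeneous of type (p,q) and degree m, and G¹ is polynomial. If the only real solution of G⁰(X,Y) = 0 is (0,0), then the origin is an isolated point of the real zero set {(x,y) ∈ ℝ² : G(x,y) = 0}. -/
private lemma cont2 {F : ℝ → ℝ → ℝ}
    (h : ∃ P : MvPolynomial (Fin 2) ℝ, ∀ x y, F x y = MvPolynomial.eval ![x, y] P) :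
    Continuous (fun v : ℝ × ℝ => F v.1 v.2) := by
  obtain ⟨P, hP⟩ := h
  have : (fun v : ℝ × ℝ => F v.1 v.2) = fun v => MvPolynomial.eval ![v.1, v.2] P := by
    funext v; exact hP v.1 v.2
  rw [this]
  exact (MvPolynomial.continuous_eval P).comp (by
    refine continuous_pi fun i => ?_
    fin_cases i
    · simpa using continuous_fst
    · simpa using continuous_snd)

private lemma cont3 {F : ℝ → ℝ → ℝ → ℝ}
    (h : ∃ P : MvPolynomial (Fin 3) ℝ, ∀ x y e, F x y e = MvPolynomial.eval ![x, y, e] P) :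
    Continuous (fun v : (ℝ × ℝ) × ℝ => F v.1.1 v.1.2 v.2) := by
  obtain ⟨P, hP⟩ := h
  have : (fun v : (ℝ × ℝ) × ℝ => F v.1.1 v.1.2 v.2)
      = fun v => MvPolynomial.eval ![v.1.1, v.1.2, v.2] P := by
    funext v; exact hP _ _ _
  rw [this]
  exact (MvPolynomial.continuous_eval P).comp (by
    refine continuous_pi fun i => ?_
    fin_cases i
    · simpa using continuous_fst.fst
    · simpa using continuous_fst.snd
    · simpa using continuous_snd)

private lemma zero_at_zero {h : ℝ → ℝ} (hc : Continuous h)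
    (hz : ∀ ε : ℝ, 0 < ε → h ε = 0) : h 0 = 0 := by
  have hcl : IsClosed {x : ℝ | h x = 0} := isClosed_eq hc continuous_const
  have : Set.Ici (0:ℝ) ⊆ {x : ℝ | h x = 0} := by
    rw [← closure_Ioi]
    exact hcl.closure_subset_iff.mpr fun x hx => hz x hx
  exact this Set.self_mem_Ici

private lemma find_eps (p q : ℕ) (hp : 0 < p) (hq : 0 < q) (x y : ℝ)
    (hr : 0 < x ^ 2 + y ^ 2) (hr1 : x ^ 2 + y ^ 2 < 1) :
    ∃ ε : ℝ, 0 < ε ∧ ε ≤ 1 ∧ x ^ 2 / ε ^ (2 * p) + y ^ 2 / ε ^ (2 * q) = 1 ∧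
      ε ^ (2 * max p q) ≤ x ^ 2 + y ^ 2 := by
  set r : ℝ := x ^ 2 + y ^ 2 with hrdef
  have hfc : ContinuousOn (fun ε : ℝ => x ^ 2 / ε ^ (2 * p) + y ^ 2 / ε ^ (2 * q))
      (Set.Icc r 1) := by
    have hne : ∀ n : ℕ, ∀ ε ∈ Set.Icc r 1, ε ^ n ≠ 0 := fun n ε hε =>
      pow_ne_zero _ (ne_of_gt (lt_of_lt_of_le hr hε.1))
    exact (continuousOn_const.div ((continuous_pow _).continuousOn) (hne _)).add
      (continuousOn_const.div ((continuous_pow _).continuousOn) (hne _))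
  have hfr : 1 ≤ x ^ 2 / r ^ (2 * p) + y ^ 2 / r ^ (2 * q) := by
    have e1 : (1 : ℝ) = x ^ 2 / r + y ^ 2 / r := by field_simp; exact hrdef
    rw [e1]
    gcongr
    · exact pow_le_of_le_one hr.le hr1.le (by omega)
    · exact pow_le_of_le_one hr.le hr1.le (by omega)
  have hmem : (1 : ℝ) ∈ Set.Icc
      ((fun ε : ℝ => x ^ 2 / ε ^ (2 * p) + y ^ 2 / ε ^ (2 * q)) 1)
      ((fun ε : ℝ => x ^ 2 / ε ^ (2 * p) + y ^ 2 / ε ^ (2 * q)) r) :=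
    ⟨by simpa using hr1.le, hfr⟩
  obtain ⟨ε, hεmem, hεeq⟩ := intermediate_value_Icc' hr1.le hfc hmem
  have hεeq' : x ^ 2 / ε ^ (2 * p) + y ^ 2 / ε ^ (2 * q) = 1 := hεeq
  have hεpos : 0 < ε := lt_of_lt_of_le hr hεmem.1
  have hε1 : ε ≤ 1 := hεmem.2
  refine ⟨ε, hεpos, hε1, hεeq', ?_⟩
  have h2 : (1 : ℝ) ≤ r / ε ^ (2 * max p q) := by
    calc (1 : ℝ) = x ^ 2 / ε ^ (2 * p) + y ^ 2 / ε ^ (2 * q) := hεeq'.symm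
    _ ≤ x ^ 2 / ε ^ (2 * max p q) + y ^ 2 / ε ^ (2 * max p q) := by
        have hmaxpos : 0 < ε ^ (2 * max p q) := pow_pos hεpos _
        have h1 : ε ^ (2 * max p q) ≤ ε ^ (2 * p) :=
          pow_le_pow_of_le_one hεpos.le hε1 (Nat.mul_le_mul_left 2 (le_max_left p q))
        have h2 : ε ^ (2 * max p q) ≤ ε ^ (2 * q) :=
          pow_le_pow_of_le_one hεpos.le hε1 (Nat.mul_le_mul_left 2 (le_max_right p q))
        exact add_le_add (div_le_div_of_nonneg_left (sq_nonneg x) hmaxpos h1)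
          (div_le_div_of_nonneg_left (sq_nonneg y) hmaxpos h2)
    _ = r / ε ^ (2 * max p q) := by rw [hrdef, ← add_div]
  exact (one_le_div (pow_pos hεpos _)).mp h2

/-- If G(εᵖX, ε^qY) = ε^m G⁰(X,Y) + ε^{m+1} G¹(X,Y,ε) for ε > 0, with p, q, m
natural numbers, gcd(p,q) = 1, G, G⁰, G¹ polynomial, G⁰ quasi-homogeneous of
type (p,q) and degree m, and G⁰ vanishes (over ℝ) only at the origin, then the
origin is an isolated point of {G = 0} ⊂ ℝ². -/
theorem isolated_point_criterion (p q m : ℕ) (hpq : Nat.gcd p q = 1)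
    (G G0 : ℝ → ℝ → ℝ) (G1 : ℝ → ℝ → ℝ → ℝ)
    (hGpoly : ∃ P : MvPolynomial (Fin 2) ℝ, ∀ x y, G x y = MvPolynomial.eval ![x, y] P)
    (hG0poly : ∃ P : MvPolynomial (Fin 2) ℝ, ∀ x y, G0 x y = MvPolynomial.eval ![x, y] P)
    (hG1poly : ∃ P : MvPolynomial (Fin 3) ℝ, ∀ x y e, G1 x y e = MvPolynomial.eval ![x, y, e] P)
    (hG00 : G 0 0 = 0)
    (hqh : ∀ ε : ℝ, 0 < ε → ∀ X Y : ℝ, G0 (ε ^ p * X) (ε ^ q * Y) = ε ^ m * G0 X Y)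
    (hdec : ∀ ε : ℝ, 0 < ε → ∀ X Y : ℝ,
      G (ε ^ p * X) (ε ^ q * Y) = ε ^ m * G0 X Y + ε ^ (m + 1) * G1 X Y ε)
    (hzero : ∀ X Y : ℝ, G0 X Y = 0 → X = 0 ∧ Y = 0) :
    ∃ U : Set (ℝ × ℝ), IsOpen U ∧ ((0 : ℝ), (0 : ℝ)) ∈ U ∧
      ∀ v ∈ U, G v.1 v.2 = 0 → v = ((0 : ℝ), (0 : ℝ)) := by
  have hG0c : Continuous (fun v : ℝ × ℝ => G0 v.1 v.2) := cont2 hG0poly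
  have hG1c : Continuous (fun v : (ℝ × ℝ) × ℝ => G1 v.1.1 v.1.2 v.2) := cont3 hG1poly
  -- G0 0 0 = 0
  have hG000 : G0 0 0 = 0 := by
    have hz : ∀ ε : ℝ, 0 < ε → G0 0 0 + ε * G1 0 0 ε = 0 := by
      intro ε hε
      have := hdec ε hε 0 0
      rw [mul_zero, mul_zero, hG00, pow_succ] at this
      have hεm : (ε : ℝ) ^ m ≠ 0 := pow_ne_zero _ hε.ne'
      have h2 : ε ^ m * (G0 0 0 + ε * G1 0 0 ε) = 0 := by ring_nf; ring_nf at this; linarith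
      rcases mul_eq_zero.mp h2 with h | h
      · exact absurd h hεm
      · exact h
    have hc : Continuous (fun ε : ℝ => G0 0 0 + ε * G1 0 0 ε) := by
      have : Continuous (fun ε : ℝ => G1 0 0 ε) :=
        hG1c.comp (by fun_prop : Continuous (fun ε : ℝ => (((0:ℝ),(0:ℝ)), ε)))
      fun_prop
    have := zero_at_zero hc hz
    simpa using this
  -- degenerate cases
  rcases Nat.eq_zero_or_pos p with hp0 | hp
  · -- p = 0, so q = 1
    exfalso
    subst hp0
    have hq1 : q = 1 := by simpa using hpq
    subst hq1
    rcases Nat.eq_zero_or_pos m with hm0 | hm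
    · subst hm0
      have hkey : ∀ ε : ℝ, 0 < ε → G0 0 ε - G0 0 1 = 0 := by
        intro ε hε
        have := hqh ε hε 0 1
        simp at this
        linarith
      have hc : Continuous (fun ε : ℝ => G0 0 ε - G0 0 1) := by
        have : Continuous (fun ε : ℝ => G0 0 ε) :=
          hG0c.comp (by fun_prop : Continuous (fun ε : ℝ => ((0:ℝ), ε)))
        fun_prop
      have h0 : G0 0 0 - G0 0 1 = 0 := zero_at_zero hc hkey
      have h01 : G0 0 1 = 0 := by linarith [hG000]
      exact one_ne_zero (hzero 0 1 h01).2
    · have h1 := hqh 2 (by norm_num) 1 0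
      simp at h1
      have h2m : (1 : ℝ) < 2 ^ m := one_lt_pow₀ (by norm_num) hm.ne'
      have h10 : G0 1 0 = 0 := by nlinarith
      exact one_ne_zero (hzero 1 0 h10).1
  rcases Nat.eq_zero_or_pos q with hq0 | hq
  · -- q = 0, so p = 1
    exfalso
    subst hq0
    have hp1 : p = 1 := by simpa using hpq
    subst hp1
    rcases Nat.eq_zero_or_pos m with hm0 | hm
    · subst hm0
      have hkey : ∀ ε : ℝ, 0 < ε → G0 ε 0 - G0 1 0 = 0 := by
        intro ε hε
        have := hqh ε hε 1 0
        simp at this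
        linarith
      have hc : Continuous (fun ε : ℝ => G0 ε 0 - G0 1 0) := by
        have : Continuous (fun ε : ℝ => G0 ε 0) :=
          hG0c.comp (by fun_prop : Continuous (fun ε : ℝ => (ε, (0:ℝ))))
        fun_prop
      have h0 : G0 0 0 - G0 1 0 = 0 := zero_at_zero hc hkey
      have h10 : G0 1 0 = 0 := by linarith [hG000]
      exact one_ne_zero (hzero 1 0 h10).1
    · have h1 := hqh 2 (by norm_num) 0 1
      simp at h1
      have h2m : (1 : ℝ) < 2 ^ m := one_lt_pow₀ (by norm_num) hm.ne'
      have h01 : G0 0 1 = 0 := by nlinarith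
      exact one_ne_zero (hzero 0 1 h01).2
  -- main case: 0 < p, 0 < q
  set S : Set (ℝ × ℝ) := {v | v.1 ^ 2 + v.2 ^ 2 = 1} with hS
  have hScl : IsClosed S := isClosed_eq (by fun_prop) continuous_const
  have hSsub : S ⊆ Set.Icc (-1 : ℝ) 1 ×ˢ Set.Icc (-1 : ℝ) 1 := by
    rintro ⟨a, b⟩ hv
    simp only [hS, Set.mem_setOf_eq] at hv
    constructor <;> constructor <;> nlinarith [sq_nonneg a, sq_nonneg b]
  have hScomp : IsCompact S :=
    (isCompact_Icc.prod isCompact_Icc).of_isClosed_subset hScl hSsub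
  have hSne : S.Nonempty := ⟨(1, 0), by simp [hS]⟩
  obtain ⟨v0, hv0S, hv0min⟩ := hScomp.exists_isMinOn hSne
    (continuous_abs.comp hG0c).continuousOn
  set c : ℝ := |G0 v0.1 v0.2| with hc
  have hcpos : 0 < c := by
    refine abs_pos.mpr fun h0 => ?_
    obtain ⟨h1, h2⟩ := hzero _ _ h0
    have hv : v0.1 ^ 2 + v0.2 ^ 2 = 1 := hv0S
    rw [h1, h2] at hv; norm_num at hv
  have hKcomp : IsCompact (S ×ˢ Set.Icc (0:ℝ) 1) := hScomp.prod isCompact_Icc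
  obtain ⟨w0, hw0, hw0max⟩ := hKcomp.exists_isMaxOn
    ⟨((1,0),0), by simp [hS]⟩ (continuous_abs.comp hG1c).continuousOn
  set M : ℝ := |G1 w0.1.1 w0.1.2 w0.2| with hM
  have hM0 : 0 ≤ M := abs_nonneg _
  set t : ℝ := min 1 (c / (M + 1)) with ht
  have htpos : 0 < t := lt_min one_pos (div_pos hcpos (by linarith))
  have ht1 : t ≤ 1 := min_le_left _ _
  set δ : ℝ := t ^ (2 * max p q) with hδ
  have hδpos : 0 < δ := pow_pos htpos _
  have hδ1 : δ ≤ 1 := pow_le_one₀ htpos.le ht1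
  refine ⟨{v : ℝ × ℝ | v.1 ^ 2 + v.2 ^ 2 < δ}, ?_, by simpa using hδpos, ?_⟩
  · exact isOpen_lt (by fun_prop) continuous_const
  intro v hvU hGv
  by_contra hne
  have hrpos : 0 < v.1 ^ 2 + v.2 ^ 2 := by
    have h1 : v.1 ≠ 0 ∨ v.2 ≠ 0 := by
      by_contra h
      push_neg at h
      exact hne (Prod.ext h.1 h.2)
    rcases h1 with h | h
    · have := mul_self_pos.mpr h
      nlinarith [sq_nonneg v.2]
    · have := mul_self_pos.mpr h
      nlinarith [sq_nonneg v.1]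
  have hvU' : v.1 ^ 2 + v.2 ^ 2 < δ := hvU
  have hr1 : v.1 ^ 2 + v.2 ^ 2 < 1 := lt_of_lt_of_le hvU' hδ1
  obtain ⟨ε, hεpos, hε1, hεeq, hεbound⟩ := find_eps p q hp hq v.1 v.2 hrpos hr1
  have hεt : ε < t := by
    refine lt_of_pow_lt_pow_left₀ (2 * max p q) htpos.le ?_
    calc ε ^ (2 * max p q) ≤ v.1 ^ 2 + v.2 ^ 2 := hεbound
    _ < δ := hvU'
  set X : ℝ := v.1 / ε ^ p with hX
  set Y : ℝ := v.2 / ε ^ q with hY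
  have hεp : (ε : ℝ) ^ p ≠ 0 := pow_ne_zero _ hεpos.ne'
  have hεq : (ε : ℝ) ^ q ≠ 0 := pow_ne_zero _ hεpos.ne'
  have hx : ε ^ p * X = v.1 := by rw [hX]; field_simp
  have hy : ε ^ q * Y = v.2 := by rw [hY]; field_simp
  have hXY : X ^ 2 + Y ^ 2 = 1 := by
    rw [hX, hY, div_pow, div_pow, ← pow_mul, ← pow_mul, mul_comm p 2, mul_comm q 2]
    exact hεeq
  have hdecv := hdec ε hεpos X Y
  rw [hx, hy, hGv] at hdecv
  have hkey : G0 X Y + ε * G1 X Y ε = 0 := by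
    have h2 : ε ^ m * (G0 X Y + ε * G1 X Y ε) = 0 := by
      rw [pow_succ] at hdecv; ring_nf; ring_nf at hdecv; linarith
    rcases mul_eq_zero.mp h2 with h | h
    · exact absurd h (pow_ne_zero _ hεpos.ne')
    · exact h
  have hmemS : ((X, Y) : ℝ × ℝ) ∈ S := hXY
  have hcle : c ≤ |G0 X Y| := hv0min hmemS
  have hMle : |G1 X Y ε| ≤ M := hw0max (⟨hmemS, hεpos.le, hε1⟩ :
    (((X, Y) : ℝ × ℝ), ε) ∈ S ×ˢ Set.Icc (0:ℝ) 1)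
  have habs : |G0 X Y| = ε * |G1 X Y ε| := by
    have : G0 X Y = -(ε * G1 X Y ε) := by linarith
    rw [this, abs_neg, abs_mul, abs_of_pos hεpos]
  have hεM : ε * (M + 1) < c := by
    have := lt_of_lt_of_le hεt (min_le_right 1 (c / (M + 1)))
    exact (lt_div_iff₀ (by linarith)).mp this
  have : c ≤ ε * M :=
    hcle.trans (habs.le.trans (mul_le_mul_of_nonneg_left hMle hεpos.le))
  nlinarith
end

section
/- For F(x,y) = y² + x³ + bx² + bx (a family depending on a parameter b), the iterated discriminants are Δ²_{x,y}(F) = -110592·b⁹·(b-4)·(b-3)⁶ and Δ²_{y,x}(F) = 256·b³·(b-4); in particular Δ²_{x,y}(F) ≠ Δ²_{y,x}(F) as polynomials in b, and gcd of the two (up to units) is b³(b-4). -/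
open Polynomial

/-- The Sylvester matrix of two polynomials f, g (of degrees n = deg f,
m = deg g): the first m rows carry the shifted coefficient lists of f and the
last n rows those of g. -/
noncomputable def sylvesterMatrix {R : Type*} [CommRing R] (f g : Polynomial R) :
    Matrix (Fin (f.natDegree + g.natDegree)) (Fin (f.natDegree + g.natDegree)) R :=
  Matrix.of fun i j =>
    if (i : ℕ) < g.natDegree then
      (if (i : ℕ) ≤ (j : ℕ) ∧ (j : ℕ) ≤ (i : ℕ) + f.natDegree then
        f.coeff (f.natDegree + i - j) else 0)
    else
      (if (i : ℕ) - g.natDegree ≤ (j : ℕ) ∧ (j : ℕ) ≤ (i : ℕ) - g.natDegree + g.natDegree then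
        g.coeff (g.natDegree + ((i : ℕ) - g.natDegree) - j) else 0)

/-- The resultant of two polynomials, as the determinant of their Sylvester
matrix. -/
noncomputable def resultant {R : Type*} [CommRing R] (f g : Polynomial R) : R :=
  (sylvesterMatrix f g).det

/-- The discriminant of a polynomial:
Δ(f) = (-1)^{n(n-1)/2} Res(f, f') / lc(f), where n = deg f. -/
noncomputable def discrim' {R : Type*} [CommRing R] [Div R] (f : Polynomial R) : R :=
  (-1 : R) ^ (f.natDegree * (f.natDegree - 1) / 2) *
    (_root_.resultant f (derivative f) / f.leadingCoeff)

section Aux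
set_option linter.unusedSectionVars false
set_option maxHeartbeats 2000000

lemma res_eq_aux {R : Type*} [CommRing R] (f g : Polynomial R) {n : ℕ}
    (h : f.natDegree + g.natDegree = n) :
    _root_.resultant f g = ((sylvesterMatrix f g).submatrix (finCongr h.symm) (finCongr h.symm)).det := by
  rw [Matrix.det_submatrix_equiv_self]; rfl

variable {R : Type*} [CommRing R] [Nontrivial R] [NoZeroDivisors R] [CharZero R]

lemma deriv_cubic_aux (a p q r : R) :
    derivative (C a * X ^ 3 + C p * X ^ 2 + C q * X + C r)
      = C (3 * a) * X ^ 2 + C (2 * p) * X + C q := by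
  simp [derivative_X_pow]; simp only [map_ofNat C]; ring

lemma natDegree_cubic_aux (a p q r : R) (ha : a ≠ 0) :
    (C a * X ^ 3 + C p * X ^ 2 + C q * X + C r).natDegree = 3 := by
  compute_degree!

lemma coeff_cubic3_aux (a p q r : R) :
    (C a * X ^ 3 + C p * X ^ 2 + C q * X + C r).coeff 3 = a := by
  simp [coeff_X, coeff_one]

lemma leadingCoeff_cubic_aux (a p q r : R) (ha : a ≠ 0) :
    (C a * X ^ 3 + C p * X ^ 2 + C q * X + C r).leadingCoeff = a := by
  rw [Polynomial.leadingCoeff, natDegree_cubic_aux a p q r ha, coeff_cubic3_aux]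

lemma natDegree_quad_aux (q : R) : (X ^ 2 + C q).natDegree = 2 := by
  compute_degree!

lemma leadingCoeff_quad_aux (q : R) : (X ^ 2 + C q).leadingCoeff = 1 := by
  rw [Polynomial.leadingCoeff, natDegree_quad_aux]
  simp [coeff_X, coeff_one]

lemma res_quad_aux (q : R) :
    _root_.resultant (X ^ 2 + C q) (derivative (X ^ 2 + C q)) = 4 * q := by
  have hd : derivative (X ^ 2 + C q) = C 2 * X := by
    simp [derivative_X_pow]; rw [← C_1, ← C_add]; norm_num
  have hf : (X ^ 2 + C q).natDegree = 2 := natDegree_quad_aux q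
  have hg : (derivative (X ^ 2 + C q)).natDegree = 1 := by rw [hd]; compute_degree!
  have h3 : (X ^ 2 + C q).natDegree + (derivative (X ^ 2 + C q)).natDegree = 3 := by rw [hf, hg]
  rw [res_eq_aux _ _ h3]
  have hM : (sylvesterMatrix (X ^ 2 + C q) (derivative (X ^ 2 + C q))).submatrix
      (finCongr h3.symm) (finCongr h3.symm) = !![1, 0, q; 2, 0, 0; 0, 2, 0] := by
    ext i j
    fin_cases i <;> fin_cases j <;>
      simp [sylvesterMatrix, hf, hg, hd, coeff_X, coeff_one, Matrix.cons_val_one,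
        Matrix.head_cons, Matrix.vecHead, Matrix.vecTail]
  rw [hM, Matrix.det_fin_three]
  norm_num [Matrix.cons_val, Matrix.cons_val_one, Matrix.head_cons, Matrix.vecHead, Matrix.vecTail]
  simp [Matrix.cons_val]; ring

lemma res_cubic_aux (a p q r : R) (ha : a ≠ 0) :
    _root_.resultant (C a * X ^ 3 + C p * X ^ 2 + C q * X + C r)
        (derivative (C a * X ^ 3 + C p * X ^ 2 + C q * X + C r))
      = -(a * (18 * a * p * q * r - 4 * p ^ 3 * r + p ^ 2 * q ^ 2 - 4 * a * q ^ 3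
          - 27 * a ^ 2 * r ^ 2)) := by
  have hd := deriv_cubic_aux a p q r
  set f := C a * X ^ 3 + C p * X ^ 2 + C q * X + C r with hfdef
  have hf : f.natDegree = 3 := natDegree_cubic_aux a p q r ha
  have hg : (derivative f).natDegree = 2 := by
    rw [hd]; compute_degree!
  have h5 : f.natDegree + (derivative f).natDegree = 5 := by rw [hf, hg]
  have c3 : f.coeff 3 = a := coeff_cubic3_aux a p q r
  have c2 : f.coeff 2 = p := by rw [hfdef]; simp [coeff_X, coeff_one]
  have c1 : f.coeff 1 = q := by rw [hfdef]; simp [coeff_X, coeff_one]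
  have c0 : f.coeff 0 = r := by rw [hfdef]; simp [coeff_X, coeff_one]
  have d2 : (derivative f).coeff 2 = 3 * a := by
    rw [hd]; simp [mul_assoc, coeff_C_mul, coeff_X, coeff_one]
  have d1 : (derivative f).coeff 1 = 2 * p := by
    rw [hd]; simp [mul_assoc, coeff_C_mul, coeff_X, coeff_one]
  have d0 : (derivative f).coeff 0 = q := by
    rw [hd]; simp [mul_assoc, coeff_C_mul, coeff_X, coeff_one]
  clear_value f
  clear hfdef hd
  rw [res_eq_aux _ _ h5]
  have hM : (sylvesterMatrix f (derivative f)).submatrix (finCongr h5.symm) (finCongr h5.symm)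
      = !![a, p, q, r, 0; 0, a, p, q, r; 3*a, 2*p, q, 0, 0; 0, 3*a, 2*p, q, 0; 0, 0, 3*a, 2*p, q] := by
    ext i j
    fin_cases i <;> fin_cases j <;>
      · simp only [sylvesterMatrix, Matrix.submatrix_apply, finCongr_apply, Fin.cast_mk,
          Matrix.of_apply, Fin.mk_le_mk, Fin.mk_lt_mk, hf, hg]
        norm_num [c0, c1, c2, c3, d0, d1, d2, Matrix.cons_val_one, Matrix.head_cons,
          Matrix.vecHead, Matrix.vecTail]
  rw [hM]
  simp [Matrix.det_succ_row_zero, Fin.sum_univ_succ]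
  norm_num [Fin.succAbove, Fin.castSucc, Fin.castAdd, Fin.castLE, Fin.succ, Fin.lt_def,
    Matrix.cons_val_one, Matrix.head_cons, Matrix.vecHead, Matrix.vecTail, Matrix.cons_val_zero,
    Matrix.cons_val_fin_one]
  ring

end Aux

section Biquad
set_option maxHeartbeats 2000000

private noncomputable def rho_aux : Equiv.Perm (Fin 7) :=
  ⟨![0,2,3,5,1,4,6], ![0,4,1,2,5,3,6], by decide, by decide⟩

private noncomputable def tau_aux : Equiv.Perm (Fin 7) :=
  ⟨![0,2,4,6,1,3,5], ![0,4,1,5,2,6,3], by decide, by decide⟩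

lemma det7_aux (A B K : ℝ) :
    (!![A, 0, B, 0, K, 0, 0;
        0, A, 0, B, 0, K, 0;
        0, 0, A, 0, B, 0, K;
        4*A, 0, 2*B, 0, 0, 0, 0;
        0, 4*A, 0, 2*B, 0, 0, 0;
        0, 0, 4*A, 0, 2*B, 0, 0;
        0, 0, 0, 4*A, 0, 2*B, 0]).det
    = (!![A,B,K,0; 0,A,B,K; 4*A,2*B,0,0; 0,4*A,2*B,0]).det
      * (!![A,B,K; 4*A,2*B,0; 0,4*A,2*B]).det := by
  set M := !![A, 0, B, 0, K, 0, 0;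
        0, A, 0, B, 0, K, 0;
        0, 0, A, 0, B, 0, K;
        4*A, 0, 2*B, 0, 0, 0, 0;
        0, 4*A, 0, 2*B, 0, 0, 0;
        0, 0, 4*A, 0, 2*B, 0, 0;
        0, 0, 0, 4*A, 0, 2*B, 0] with hM
  have hsr : Equiv.Perm.sign rho_aux = 1 := by decide
  have hst : Equiv.Perm.sign tau_aux = 1 := by decide
  have h1 : ((M.submatrix rho_aux id).submatrix id tau_aux).det = M.det := by
    rw [Matrix.det_permute', Matrix.det_permute, hsr, hst]
    norm_num
  have h2 : (M.submatrix rho_aux id).submatrix id tau_aux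
      = (Matrix.fromBlocks (!![A,B,K,0; 0,A,B,K; 4*A,2*B,0,0; 0,4*A,2*B,0]) 0 0
          (!![A,B,K; 4*A,2*B,0; 0,4*A,2*B])).submatrix finSumFinEquiv.symm finSumFinEquiv.symm := by
    ext i j
    fin_cases i <;> fin_cases j <;> rfl
  rw [← h1, h2, Matrix.det_submatrix_equiv_self, Matrix.det_fromBlocks_zero₂₁]

lemma deriv_biquad_aux (A B K : ℝ) :
    derivative (C A * X ^ 4 + C B * X ^ 2 + C K)
      = C (4 * A) * X ^ 3 + C (2 * B) * X := by
  simp [derivative_X_pow]; simp only [map_ofNat C]; ring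

lemma natDegree_biquad_aux (A B K : ℝ) (hA : A ≠ 0) :
    (C A * X ^ 4 + C B * X ^ 2 + C K).natDegree = 4 := by
  compute_degree!

lemma leadingCoeff_biquad_aux (A B K : ℝ) (hA : A ≠ 0) :
    (C A * X ^ 4 + C B * X ^ 2 + C K).leadingCoeff = A := by
  rw [Polynomial.leadingCoeff, natDegree_biquad_aux A B K hA]
  simp [coeff_X, coeff_one]

lemma res_biquad_aux (A B K : ℝ) (hA : A ≠ 0) :
    _root_.resultant (C A * X ^ 4 + C B * X ^ 2 + C K)
        (derivative (C A * X ^ 4 + C B * X ^ 2 + C K))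
      = 16 * A ^ 2 * K * (B ^ 2 - 4 * A * K) ^ 2 := by
  have hd := deriv_biquad_aux A B K
  set f := C A * X ^ 4 + C B * X ^ 2 + C K with hfdef
  have hf : f.natDegree = 4 := natDegree_biquad_aux A B K hA
  have hg : (derivative f).natDegree = 3 := by
    rw [hd]; compute_degree!
  have h7 : f.natDegree + (derivative f).natDegree = 7 := by rw [hf, hg]
  have c4 : f.coeff 4 = A := by rw [hfdef]; simp [coeff_X, coeff_one]
  have c3 : f.coeff 3 = 0 := by rw [hfdef]; simp [coeff_X, coeff_one]
  have c2 : f.coeff 2 = B := by rw [hfdef]; simp [coeff_X, coeff_one]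
  have c1 : f.coeff 1 = 0 := by rw [hfdef]; simp [coeff_X, coeff_one]
  have c0 : f.coeff 0 = K := by rw [hfdef]; simp [coeff_X, coeff_one]
  have d3 : (derivative f).coeff 3 = 4 * A := by
    rw [hd]; simp [mul_assoc, coeff_C_mul, coeff_X, coeff_one]
  have d2 : (derivative f).coeff 2 = 0 := by
    rw [hd]; simp [mul_assoc, coeff_C_mul, coeff_X, coeff_one]
  have d1 : (derivative f).coeff 1 = 2 * B := by
    rw [hd]; simp [mul_assoc, coeff_C_mul, coeff_X, coeff_one]
  have d0 : (derivative f).coeff 0 = 0 := by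
    rw [hd]; simp [mul_assoc, coeff_C_mul, coeff_X, coeff_one]
  clear_value f
  clear hfdef hd
  rw [res_eq_aux _ _ h7]
  have hM : (sylvesterMatrix f (derivative f)).submatrix (finCongr h7.symm) (finCongr h7.symm)
      = !![A, 0, B, 0, K, 0, 0;
           0, A, 0, B, 0, K, 0;
           0, 0, A, 0, B, 0, K;
           4*A, 0, 2*B, 0, 0, 0, 0;
           0, 4*A, 0, 2*B, 0, 0, 0;
           0, 0, 4*A, 0, 2*B, 0, 0;
           0, 0, 0, 4*A, 0, 2*B, 0] := by
    ext i j
    fin_cases i <;> fin_cases j <;>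
      · simp only [sylvesterMatrix, Matrix.submatrix_apply, finCongr_apply, Fin.cast_mk,
          Matrix.of_apply, Fin.mk_le_mk, Fin.mk_lt_mk, hf, hg]
        norm_num [c0, c1, c2, c3, c4, d0, d1, d2, d3, Matrix.cons_val_one, Matrix.head_cons,
          Matrix.vecHead, Matrix.vecTail]
  rw [hM, det7_aux]
  rw [Matrix.det_fin_three]
  simp [Matrix.det_succ_row_zero, Fin.sum_univ_succ]
  norm_num [Fin.succAbove, Fin.castSucc, Fin.castAdd, Fin.castLE, Fin.succ, Fin.lt_def,
    Matrix.cons_val_one, Matrix.head_cons, Matrix.vecHead, Matrix.vecTail, Matrix.cons_val_zero,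
    Matrix.cons_val_fin_one]
  ring

end Biquad

/-- For F(x,y) = y² + x³ + bx² + bx one has
Δ²_{x,y}(F) = -110592 b⁹ (b-4)(b-3)⁶ and Δ²_{y,x}(F) = 256 b³ (b-4);
in particular the two double discriminants differ as polynomials in b, and
their gcd, up to units, is b³(b-4). -/
theorem double_discriminants_example :
    (∀ b : ℝ,
      discrim' (discrim'
        ((X : Polynomial (Polynomial ℝ)) ^ 3 + C (C b) * X ^ 2 + C (C b) * X
          + C (X ^ 2)))
        = -110592 * b ^ 9 * (b - 4) * (b - 3) ^ 6) ∧
    (∀ b : ℝ,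
      discrim' (discrim'
        ((X : Polynomial (Polynomial ℝ)) ^ 2
          + C (X ^ 3 + C b * X ^ 2 + C b * X)))
        = 256 * b ^ 3 * (b - 4)) ∧
    ((-110592 : Polynomial ℝ) * X ^ 9 * (X - 4) * (X - 3) ^ 6
        ≠ 256 * X ^ 3 * (X - 4)) ∧
    Associated
      (gcd ((-110592 : Polynomial ℝ) * X ^ 9 * (X - 4) * (X - 3) ^ 6)
        (256 * X ^ 3 * (X - 4)))
      (X ^ 3 * (X - 4)) := by
  refine ⟨?_, ?_, ?_, ?_⟩
  · intro b
    have e1 : (X : Polynomial (Polynomial ℝ)) ^ 3 + C (C b) * X ^ 2 + C (C b) * X + C (X ^ 2)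
        = C (1 : Polynomial ℝ) * X ^ 3 + C (C b) * X ^ 2 + C (C b) * X + C (X ^ 2) := by
      rw [map_one, one_mul]
    rw [e1]
    have hin : discrim' (C (1 : Polynomial ℝ) * X ^ 3 + C (C b) * X ^ 2 + C (C b) * X + C (X ^ 2))
        = C (-27 : ℝ) * X ^ 4 + C (18*b^2 - 4*b^3) * X ^ 2 + C (b^4 - 4*b^3) := by
      rw [discrim', natDegree_cubic_aux _ _ _ _ (one_ne_zero),
        leadingCoeff_cubic_aux _ _ _ _ (one_ne_zero),
        res_cubic_aux _ _ _ _ (one_ne_zero), EuclideanDomain.div_one]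
      norm_num [map_sub, map_mul, map_pow, map_add, map_ofNat]
      ring
    rw [hin, discrim', natDegree_biquad_aux _ _ _ (by norm_num),
      leadingCoeff_biquad_aux _ _ _ (by norm_num),
      res_biquad_aux _ _ _ (by norm_num)]
    norm_num
    ring
  · intro b
    have hin : discrim' ((X : Polynomial (Polynomial ℝ)) ^ 2
        + C (X ^ 3 + C b * X ^ 2 + C b * X))
        = C (-4 : ℝ) * X ^ 3 + C (-(4*b)) * X ^ 2 + C (-(4*b)) * X + C 0 := by
      rw [discrim', natDegree_quad_aux, leadingCoeff_quad_aux, res_quad_aux,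
        EuclideanDomain.div_one]
      norm_num [map_neg, map_mul, map_ofNat]
      ring
    rw [hin, discrim', natDegree_cubic_aux (-4 : ℝ) _ _ _ (by norm_num),
      leadingCoeff_cubic_aux (-4 : ℝ) _ _ _ (by norm_num),
      res_cubic_aux (-4 : ℝ) _ _ _ (by norm_num)]
    norm_num
    ring
  · intro h
    have h1 := congrArg (Polynomial.eval (1:ℝ)) h
    simp [eval_mul, eval_pow, eval_sub] at h1
    norm_num at h1
  · have hd1 : (X ^ 3 * (X - 4) : Polynomial ℝ) ∣
        (-110592 : Polynomial ℝ) * X ^ 9 * (X - 4) * (X - 3) ^ 6 :=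
      ⟨-110592 * X ^ 6 * (X - 3) ^ 6, by ring⟩
    have hd2 : (X ^ 3 * (X - 4) : Polynomial ℝ) ∣ 256 * X ^ 3 * (X - 4) := ⟨256, by ring⟩
    have h256 : (256 : Polynomial ℝ) * C (1/256) = 1 := by
      rw [show (256 : Polynomial ℝ) = C 256 from rfl, ← C_mul]
      norm_num
    have hQ : (X ^ 3 * (X - 4) : Polynomial ℝ) = (256 * X ^ 3 * (X - 4)) * C (1/256) := by
      calc (X ^ 3 * (X - 4) : Polynomial ℝ)
          = ((256 : Polynomial ℝ) * C (1/256)) * (X ^ 3 * (X - 4)) := by rw [h256, one_mul]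
        _ = (256 * X ^ 3 * (X - 4)) * C (1/256) := by ring
    have hg : gcd ((-110592 : Polynomial ℝ) * X ^ 9 * (X - 4) * (X - 3) ^ 6)
        (256 * X ^ 3 * (X - 4)) ∣ X ^ 3 * (X - 4) := by
      rw [hQ]
      exact (gcd_dvd_right _ _).mul_right _
    exact associated_of_dvd_dvd hg (dvd_gcd hd1 hd2)
end

section
/- For the polynomial F(x,y) = x³y³ + x + 1, both double discriminants vanish, Δ²_{y,x}(F) = Δ²_{x,y}(F) = 0, yet the complex curve {F = 0} has no singular points: F, F_x = 3x²y³ + 1, and F_y = 3x³y² have no common zero in ℂ². This shows the converse of the singular-point criterion via double discriminants fails. -/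
open Polynomial

set_option maxHeartbeats 2000000
set_option maxRecDepth 10000

lemma resultant_eq_zero_aux {R : Type*} [CommRing R] (f g : Polynomial R)
    (hf : f.coeff 0 = 0) (hg : g.coeff 0 = 0) (h : f.natDegree + g.natDegree ≠ 0) :
    _root_.resultant f g = 0 := by
  apply Matrix.det_eq_zero_of_column_eq_zero ⟨f.natDegree + g.natDegree - 1, by omega⟩
  rintro ⟨i, hi⟩
  simp only [sylvesterMatrix, Matrix.of_apply]
  split_ifs with h1 h2 h3
  · convert hf using 2; omega
  · rfl
  · convert hg using 2; omega
  · rfl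

lemma disc1 : discrim' ((C ((X : Polynomial ℂ) ^ 3)) * (X : Polynomial (Polynomial ℂ)) ^ 3
    + C (X + 1)) = -(27 * X ^ 8 + 54 * X ^ 7 + 27 * X ^ 6) := by
  set f : Polynomial (Polynomial ℂ) := (C ((X : Polynomial ℂ) ^ 3)) * X ^ 3 + C (X + 1) with hf
  have hder : derivative f = C (3 * (X : Polynomial ℂ) ^ 3) * X ^ 2 := by
    rw [hf]; simp [derivative_pow]; ring
  have hn : f.natDegree = 3 := by rw [hf]; compute_degree!
  have hm : (derivative f).natDegree = 2 := by rw [hder]; compute_degree!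
  have hsum : f.natDegree + (derivative f).natDegree = 5 := by omega
  have hfc : ∀ k, f.coeff k = if k = 3 then (X:Polynomial ℂ)^3 else if k = 0 then X + 1 else 0 := by
    intro k
    rw [hf]
    simp only [coeff_add, coeff_C_mul, coeff_X_pow, coeff_C]
    split_ifs <;> first | omega | simp
  have hgc : ∀ k, (derivative f).coeff k = if k = 2 then 3 * (X:Polynomial ℂ)^3 else 0 := by
    intro k
    rw [hder]
    simp only [coeff_C_mul, coeff_X_pow]
    split_ifs <;> first | omega | simp
  have hres : _root_.resultant f (derivative f) = 27 * X ^ 9 * (X + 1) ^ 2 := by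
    have : _root_.resultant f (derivative f) =
        (!![(X:Polynomial ℂ)^3, 0, 0, X+1, 0;
            0, (X:Polynomial ℂ)^3, 0, 0, X+1;
            3*(X:Polynomial ℂ)^3, 0, 0, 0, 0;
            0, 3*(X:Polynomial ℂ)^3, 0, 0, 0;
            0, 0, 3*(X:Polynomial ℂ)^3, 0, 0] : Matrix (Fin 5) (Fin 5) (Polynomial ℂ)).det := by
      unfold _root_.resultant
      rw [← Matrix.det_submatrix_equiv_self (finCongr hsum.symm)]
      congr 1
      apply Matrix.ext
      intro i j
      fin_cases i <;> fin_cases j <;>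
        (simp [sylvesterMatrix, hn, hm, hfc, hgc, Matrix.submatrix_apply] <;>
         simp [Fin.le_def, Fin.lt_def, Fin.coe_cast, Matrix.vecHead, Matrix.vecTail,
           show ((0 : Fin 5) : ℕ) = 0 from rfl, show ((1 : Fin 5) : ℕ) = 1 from rfl,
           show ((2 : Fin 5) : ℕ) = 2 from rfl, show ((3 : Fin 5) : ℕ) = 3 from rfl,
           show ((4 : Fin 5) : ℕ) = 4 from rfl])
    rw [this]
    simp [Matrix.det_succ_row_zero, Fin.sum_univ_succ]
    simp [Fin.succAbove, Fin.lt_def, Matrix.cons_val_succ,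
      Fin.castSucc, Fin.castAdd, Fin.castLE, Matrix.vecHead, Matrix.vecTail,
      show ((0 : Fin 5) : ℕ) = 0 from rfl, show ((1 : Fin 5) : ℕ) = 1 from rfl,
      show ((2 : Fin 5) : ℕ) = 2 from rfl, show ((3 : Fin 5) : ℕ) = 3 from rfl,
      show ((4 : Fin 5) : ℕ) = 4 from rfl]
    ring
  have hlc : f.leadingCoeff = (X : Polynomial ℂ) ^ 3 := by
    rw [Polynomial.leadingCoeff, hn, hfc]; simp
  unfold discrim'
  rw [hn, hres, hlc]
  rw [show (27 * X ^ 9 * (X + 1) ^ 2 : Polynomial ℂ)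
      = X ^ 3 * (27 * X ^ 8 + 54 * X ^ 7 + 27 * X ^ 6) by ring]
  rw [mul_div_cancel_left₀ _ (pow_ne_zero 3 Polynomial.X_ne_zero)]
  norm_num

lemma disc2 : discrim' ((C ((X : Polynomial ℂ) ^ 3)) * (X : Polynomial (Polynomial ℂ)) ^ 3
    + X + 1) = -(27 * X ^ 6 + 4 * X ^ 3) := by
  set f : Polynomial (Polynomial ℂ) := (C ((X : Polynomial ℂ) ^ 3)) * X ^ 3 + X + 1 with hf
  have hder : derivative f = C (3 * (X : Polynomial ℂ) ^ 3) * X ^ 2 + 1 := by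
    rw [hf]; simp [derivative_pow]; ring
  have hn : f.natDegree = 3 := by rw [hf]; compute_degree!
  have hm : (derivative f).natDegree = 2 := by rw [hder]; compute_degree!
  have hsum : f.natDegree + (derivative f).natDegree = 5 := by omega
  have hfc : ∀ k, f.coeff k = if k = 3 then (X:Polynomial ℂ)^3
      else if k = 1 then 1 else if k = 0 then 1 else 0 := by
    intro k
    rw [hf]
    simp only [coeff_add, coeff_C_mul, coeff_X_pow, coeff_X, coeff_one]
    split_ifs <;> first | omega | simp
  have hgc : ∀ k, (derivative f).coeff k = if k = 2 then 3 * (X:Polynomial ℂ)^3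
      else if k = 0 then 1 else 0 := by
    intro k
    rw [hder]
    simp only [coeff_add, coeff_C_mul, coeff_X_pow, coeff_one]
    split_ifs <;> first | omega | simp
  have hres : _root_.resultant f (derivative f) = 27 * X ^ 9 + 4 * X ^ 6 := by
    have : _root_.resultant f (derivative f) =
        (!![(X:Polynomial ℂ)^3, 0, 1, 1, 0;
            0, (X:Polynomial ℂ)^3, 0, 1, 1;
            3*(X:Polynomial ℂ)^3, 0, 1, 0, 0;
            0, 3*(X:Polynomial ℂ)^3, 0, 1, 0;
            0, 0, 3*(X:Polynomial ℂ)^3, 0, 1] : Matrix (Fin 5) (Fin 5) (Polynomial ℂ)).det := by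
      unfold _root_.resultant
      rw [← Matrix.det_submatrix_equiv_self (finCongr hsum.symm)]
      congr 1
      apply Matrix.ext
      intro i j
      fin_cases i <;> fin_cases j <;>
        (simp [sylvesterMatrix, hn, hm, hfc, hgc, Matrix.submatrix_apply] <;>
         simp [Fin.le_def, Fin.lt_def, Fin.coe_cast, Matrix.vecHead, Matrix.vecTail,
           show ((0 : Fin 5) : ℕ) = 0 from rfl, show ((1 : Fin 5) : ℕ) = 1 from rfl,
           show ((2 : Fin 5) : ℕ) = 2 from rfl, show ((3 : Fin 5) : ℕ) = 3 from rfl,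
           show ((4 : Fin 5) : ℕ) = 4 from rfl])
    rw [this]
    simp [Matrix.det_succ_row_zero, Fin.sum_univ_succ]
    simp [Fin.succAbove, Fin.lt_def, Matrix.cons_val_succ,
      Fin.castSucc, Fin.castAdd, Fin.castLE, Matrix.vecHead, Matrix.vecTail,
      show ((0 : Fin 5) : ℕ) = 0 from rfl, show ((1 : Fin 5) : ℕ) = 1 from rfl,
      show ((2 : Fin 5) : ℕ) = 2 from rfl, show ((3 : Fin 5) : ℕ) = 3 from rfl,
      show ((4 : Fin 5) : ℕ) = 4 from rfl]
    ring
  have hlc : f.leadingCoeff = (X : Polynomial ℂ) ^ 3 := by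
    rw [Polynomial.leadingCoeff, hn, hfc]; simp
  unfold discrim'
  rw [hn, hres, hlc]
  rw [show (27 * X ^ 9 + 4 * X ^ 6 : Polynomial ℂ)
      = X ^ 3 * (27 * X ^ 6 + 4 * X ^ 3) by ring]
  rw [mul_div_cancel_left₀ _ (pow_ne_zero 3 Polynomial.X_ne_zero)]
  norm_num

lemma outer_zero (g : Polynomial ℂ) (h0 : g.coeff 0 = 0) (h1 : g.coeff 1 = 0)
    (hd : g.natDegree ≠ 0) : discrim' g = 0 := by
  unfold discrim'
  rw [resultant_eq_zero_aux _ _ h0 (by rw [coeff_derivative, h1]; ring) (by omega)]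
  simp

/-- For F(x,y) = x³y³ + x + 1 both double discriminants vanish,
Δ²_{y,x}(F) = Δ²_{x,y}(F) = 0, yet the complex curve {F = 0} has no singular
point: F, F_x = 3x²y³ + 1 and F_y = 3x³y² have no common zero in ℂ². Hence the
converse of the double-discriminant singularity criterion fails. -/
theorem double_discriminant_converse_fails :
    discrim' (discrim'
      ((C ((X : Polynomial ℂ) ^ 3)) * (X : Polynomial (Polynomial ℂ)) ^ 3
        + C (X + 1))) = 0 ∧
    discrim' (discrim'
      ((C ((X : Polynomial ℂ) ^ 3)) * (X : Polynomial (Polynomial ℂ)) ^ 3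
        + X + 1)) = 0 ∧
    ¬ ∃ x y : ℂ, x ^ 3 * y ^ 3 + x + 1 = 0 ∧ 3 * x ^ 2 * y ^ 3 + 1 = 0 ∧
        3 * x ^ 3 * y ^ 2 = 0 := by
  refine ⟨?_, ?_, ?_⟩
  · rw [disc1]
    apply outer_zero
    · simp [coeff_neg, coeff_add, coeff_ofNat_mul, coeff_X_pow]
    · simp [coeff_neg, coeff_add, coeff_ofNat_mul, coeff_X_pow]
    · have : (-(27 * X ^ 8 + 54 * X ^ 7 + 27 * X ^ 6) : Polynomial ℂ).natDegree = 8 := by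
        compute_degree!
      omega
  · rw [disc2]
    apply outer_zero
    · simp [coeff_neg, coeff_add, coeff_ofNat_mul, coeff_X_pow]
    · simp [coeff_neg, coeff_add, coeff_ofNat_mul, coeff_X_pow]
    · have : (-(27 * X ^ 6 + 4 * X ^ 3) : Polynomial ℂ).natDegree = 6 := by
        compute_degree!
      omega
  · rintro ⟨x, y, h1, h2, h3⟩
    have hxy : x = 0 ∨ y = 0 := by
      rcases mul_eq_zero.mp h3 with h | h
      · left
        have hx : x ^ 3 = 0 := (mul_eq_zero.mp h).resolve_left (by norm_num)
        exact pow_eq_zero_iff (by norm_num) |>.mp hx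
      · right; exact pow_eq_zero_iff (by norm_num) |>.mp h
    rcases hxy with rfl | rfl
    · simp at h1
    · simp at h2
end

section
/- Let P(x) be a real polynomial of degree n and α < β real numbers. Define the normalized polynomial N(x) = (x+1)ⁿ·P((βx + α)/(x + 1)). Then the map x ↦ (βx + α)/(x + 1) is a bijection from (0, ∞) onto (α, β), and the number of real roots of P in (α, β), counted with multiplicity, equals the number of real roots of N in (0, ∞), counted with multiplicity. -/
open Polynomial

/-- The normalized version N(x) = (x+1)^{deg P} · P((βx+α)/(x+1)) of a real
polynomial P with respect to the interval (α, β), written as a polynomial. -/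
noncomputable def normalizedVersion (P : Polynomial ℝ) (α β : ℝ) : Polynomial ℝ :=
  ∑ i ∈ Finset.range (P.natDegree + 1),
    C (P.coeff i) * (C β * X + C α) ^ i * (X + 1) ^ (P.natDegree - i)

lemma eval_nv (P : Polynomial ℝ) (α β x : ℝ) (hx : x + 1 ≠ 0) :
    (normalizedVersion P α β).eval x
      = (x + 1) ^ P.natDegree * P.eval ((β * x + α) / (x + 1)) := by
  rw [normalizedVersion, eval_finset_sum, P.eval_eq_sum_range, Finset.mul_sum]
  refine Finset.sum_congr rfl fun i hi => ?_
  rw [Finset.mem_range, Nat.lt_succ_iff] at hi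
  simp only [eval_mul, eval_pow, eval_C, eval_add, eval_X, eval_one, div_pow]
  rw [← pow_sub_mul_pow (x+1) hi]
  field_simp

lemma eval_nv_neg_one (P : Polynomial ℝ) (α β : ℝ) :
    (normalizedVersion P α β).eval (-1) = P.leadingCoeff * (α - β) ^ P.natDegree := by
  rw [normalizedVersion, eval_finset_sum]
  rw [Finset.sum_eq_single P.natDegree]
  · simp only [Nat.sub_self, pow_zero, mul_one, eval_mul, eval_pow, eval_add, eval_C, eval_X,
      eval_one, leadingCoeff]
    ring_nf
  · intro i hi hne
    rw [Finset.mem_range, Nat.lt_succ_iff] at hi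
    have : 0 < P.natDegree - i := Nat.sub_pos_of_lt (lt_of_le_of_ne hi hne)
    simp [zero_pow this.ne']
  · simp

lemma nv_ne_zero (P : Polynomial ℝ) (α β : ℝ) (hP : P ≠ 0) (hαβ : α ≠ β) :
    normalizedVersion P α β ≠ 0 := by
  intro h
  have := eval_nv_neg_one P α β
  rw [h, eval_zero] at this
  exact (mul_ne_zero (leadingCoeff_ne_zero.mpr hP)
    (pow_ne_zero _ (sub_ne_zero.mpr hαβ))) this.symm

lemma nv_mul (P Q : Polynomial ℝ) (α β : ℝ) (hP : P ≠ 0) (hQ : Q ≠ 0) :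
    normalizedVersion (P * Q) α β = normalizedVersion P α β * normalizedVersion Q α β := by
  apply Polynomial.eq_of_infinite_eval_eq
  apply Set.Infinite.mono (s := {(-1 : ℝ)}ᶜ)
  · intro x hx
    have hx1 : x + 1 ≠ 0 := by
      simp only [Set.mem_compl_iff, Set.mem_singleton_iff] at hx
      intro h; apply hx; linarith
    simp only [Set.mem_setOf_eq, eval_mul, eval_nv _ _ _ _ hx1,
      natDegree_mul hP hQ, Polynomial.eval_mul, pow_add]
    ring
  · exact Set.Finite.infinite_compl (Set.finite_singleton _)

lemma nv_linear (r α β : ℝ) (hr : r < β) :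
    normalizedVersion (X - C r) α β = C (β - r) * (X - C ((r - α) / (β - r))) := by
  have h : (X - C r : Polynomial ℝ).natDegree = 1 := natDegree_X_sub_C r
  have hb : β - r ≠ 0 := sub_ne_zero.mpr hr.ne'
  rw [normalizedVersion, h]
  simp only [Finset.sum_range_succ, Finset.sum_range_zero, coeff_sub, coeff_X, coeff_C]
  simp only [zero_add]
  norm_num
  rw [mul_sub, ← C_sub, ← C_mul, mul_div_cancel₀ _ hb, C_sub, C_sub]
  ring

lemma maps_to_Ioo (α β : ℝ) (hαβ : α < β) :
    Set.MapsTo (fun x : ℝ => (β * x + α) / (x + 1)) (Set.Ioi 0) (Set.Ioo α β) := by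
  intro x hx
  have hx0 : (0:ℝ) < x := hx
  have hx1 : (0:ℝ) < x + 1 := by linarith
  constructor
  · rw [lt_div_iff₀ hx1]; nlinarith
  · rw [div_lt_iff₀ hx1]; nlinarith

open Classical in
lemma count_no_root (P : Polynomial ℝ) (α β : ℝ) (hαβ : α < β)
    (h : ∀ r ∈ P.roots, r ∉ Set.Ioo α β) :
    Multiset.card (P.roots.filter fun r => r ∈ Set.Ioo α β)
      = Multiset.card ((normalizedVersion P α β).roots.filter fun r => r ∈ Set.Ioi 0) := by
  rw [Multiset.filter_eq_nil.mpr h, Multiset.card_zero]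
  by_cases hP : P = 0
  · have : normalizedVersion P α β = 0 := by
      subst hP; simp [normalizedVersion]
    rw [this]; simp
  · symm
    rw [Multiset.card_eq_zero, Multiset.filter_eq_nil]
    intro x hx hx0
    have hx0' : (0:ℝ) < x := hx0
    have hx1 : x + 1 ≠ 0 := by positivity
    have hev : (normalizedVersion P α β).eval x = 0 :=
      (mem_roots'.mp hx).2
    rw [eval_nv _ _ _ _ hx1] at hev
    have hPev : P.eval ((β * x + α) / (x + 1)) = 0 := by
      rcases mul_eq_zero.mp hev with h1 | h1
      · exact absurd h1 (pow_ne_zero _ hx1)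
      · exact h1
    have : (β * x + α) / (x + 1) ∈ P.roots :=
      mem_roots'.mpr ⟨hP, hPev⟩
    exact h _ this (maps_to_Ioo α β hαβ hx0)

open Classical in
lemma count_aux (α β : ℝ) (hαβ : α < β) : ∀ n (P : Polynomial ℝ), P.natDegree ≤ n →
    Multiset.card (P.roots.filter fun r => r ∈ Set.Ioo α β)
      = Multiset.card ((normalizedVersion P α β).roots.filter fun r => r ∈ Set.Ioi 0) := by
  intro n
  induction n with
  | zero =>
    intro P hP
    apply count_no_root P α β hαβ
    intro r hr
    have hP0 : P ≠ 0 := by rintro rfl; simp at hr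
    have := card_roots' P
    intro _
    have h1 : 1 ≤ Multiset.card P.roots := Multiset.card_pos_iff_exists_mem.mpr ⟨r, hr⟩
    omega
  | succ n ih =>
    intro P hP
    by_cases hex : ∃ r ∈ P.roots, r ∈ Set.Ioo α β
    · obtain ⟨r, hr, hrI⟩ := hex
      have hP0 : P ≠ 0 := by rintro rfl; simp at hr
      have hroot : IsRoot P r := isRoot_of_mem_roots hr
      obtain ⟨Q, hQ⟩ := (dvd_iff_isRoot).mpr hroot
      have hQ0 : Q ≠ 0 := by rintro rfl; rw [mul_zero] at hQ; exact hP0 hQ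
      have hdeg : Q.natDegree ≤ n := by
        have := natDegree_mul (X_sub_C_ne_zero r) hQ0
        rw [← hQ, natDegree_X_sub_C] at this
        omega
      have hXr : (X - C r : Polynomial ℝ) ≠ 0 := X_sub_C_ne_zero r
      have hb : β - r ≠ 0 := sub_ne_zero.mpr hrI.2.ne'
      rw [hQ, roots_mul (by rw [← hQ]; exact hP0), roots_X_sub_C,
        nv_mul _ _ _ _ hXr hQ0,
        roots_mul (mul_ne_zero (nv_ne_zero _ _ _ hXr hαβ.ne) (nv_ne_zero _ _ _ hQ0 hαβ.ne)),
        Multiset.filter_add, Multiset.filter_add, Multiset.card_add, Multiset.card_add]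
      congr 1
      · rw [nv_linear r α β hrI.2, roots_C_mul _ hb, roots_X_sub_C]
        rw [Multiset.filter_singleton, Multiset.filter_singleton]
        have h1 : r ∈ Set.Ioo α β := hrI
        have h2 : (r - α) / (β - r) ∈ Set.Ioi (0:ℝ) :=
          div_pos (show (0:ℝ) < r - α by linarith [hrI.1]) (show (0:ℝ) < β - r by linarith [hrI.2])
        rw [if_pos h1, if_pos h2]
        simp
      · exact ih Q hdeg
    · push_neg at hex
      exact count_no_root P α β hαβ hex

open Classical in
/-- x ↦ (βx+α)/(x+1) is a bijection from (0,∞) onto (α,β), the normalized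
polynomial agrees with (x+1)^{deg P}·P((βx+α)/(x+1)), and the number of roots
of P in (α,β), with multiplicity, equals the number of roots of the normalized
polynomial in (0,∞), with multiplicity. -/
theorem normalized_root_count (P : Polynomial ℝ) (α β : ℝ) (hαβ : α < β) :
    Set.BijOn (fun x : ℝ => (β * x + α) / (x + 1)) (Set.Ioi 0) (Set.Ioo α β) ∧
    (∀ x : ℝ, x ≠ -1 →
      (normalizedVersion P α β).eval x
        = (x + 1) ^ P.natDegree * P.eval ((β * x + α) / (x + 1))) ∧
    Multiset.card (P.roots.filter fun r => r ∈ Set.Ioo α β)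
      = Multiset.card ((normalizedVersion P α β).roots.filter fun r => r ∈ Set.Ioi 0) := by
  refine ⟨⟨maps_to_Ioo α β hαβ, ?_, ?_⟩, ?_, ?_⟩
  · -- InjOn
    intro x hx y hy h
    have hx1 : (0:ℝ) < x + 1 := by have := Set.mem_Ioi.mp hx; linarith
    have hy1 : (0:ℝ) < y + 1 := by have := Set.mem_Ioi.mp hy; linarith
    simp only at h
    rw [div_eq_div_iff hx1.ne' hy1.ne'] at h
    have h2 : (β - α) * (x - y) = 0 := by ring_nf; nlinarith [h]
    rcases mul_eq_zero.mp h2 with h3 | h3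
    · linarith [sub_ne_zero.mpr hαβ.ne', h3]
    · linarith [sub_eq_zero.mp h3]
  · -- SurjOn
    intro y hy
    have h1 : (0:ℝ) < y - α := by have := hy.1; linarith
    have h2 : (0:ℝ) < β - y := by have := hy.2; linarith
    refine ⟨(y - α) / (β - y), div_pos h1 h2, ?_⟩
    have hx1 : (y - α) / (β - y) + 1 ≠ 0 := by positivity
    simp only
    have hba : β - α ≠ 0 := sub_ne_zero.mpr hαβ.ne'
    field_simp
    ring_nf
  · intro x hx
    exact eval_nv P α β x (by intro h; apply hx; linarith)
  · exact count_aux α β hαβ (P.natDegree) P le_rfl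
end

section
/- For 0 < b < √(2/3), the function (φ₁ - φ₃)(x), where φ₁(x) = -1/x and φ₃(x) = (x² - 5bx + 13b²)/(9b³(x - b)²), has exactly one zero x₀ in (-∞, 0), and this zero satisfies -2b < x₀ < 0. -/
/-- For 0 < b < √(2/3), the function (φ₁ - φ₃)(x) with φ₁(x) = -1/x and
φ₃(x) = (x² - 5bx + 13b²)/(9b³(x-b)²) has exactly one zero x₀ in (-∞, 0), and
-2b < x₀ < 0. -/
theorem unique_negative_zero (b : ℝ) (hb0 : 0 < b) (hb : b < Real.sqrt (2 / 3)) :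
    ∃ x₀ : ℝ, x₀ < 0 ∧
      (-1 / x₀ - (x₀ ^ 2 - 5 * b * x₀ + 13 * b ^ 2) / (9 * b ^ 3 * (x₀ - b) ^ 2) = 0) ∧
      (-2 * b < x₀) ∧
      (∀ x : ℝ, x < 0 →
        -1 / x - (x ^ 2 - 5 * b * x + 13 * b ^ 2) / (9 * b ^ 3 * (x - b) ^ 2) = 0 →
        x = x₀) := by
  have hb2 : b ^ 2 < 2 / 3 := by
    nlinarith [Real.sq_sqrt (by norm_num : ((2:ℝ)/3) ≥ 0), Real.sqrt_nonneg ((2:ℝ)/3)]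
  set N : ℝ → ℝ := fun x => -x^3 + (5*b-9*b^3)*x^2 + (18*b^4-13*b^2)*x - 9*b^5 with hNdef
  have hanti : StrictAnti N := by
    intro x y hxy
    have key : x^2 + x*y + y^2 - (5*b-9*b^3)*(x+y) - (18*b^4-13*b^2) > 0 := by
      nlinarith [sq_nonneg (3*(x+y) - 2*(5*b-9*b^3)), sq_nonneg (x-y), mul_pos hb0 hb0,
        sq_nonneg b, mul_pos (mul_pos hb0 hb0) (mul_pos hb0 hb0)]
    have hprod : (y - x) * (x^2 + x*y + y^2 - (5*b-9*b^3)*(x+y) - (18*b^4-13*b^2)) > 0 :=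
      mul_pos (sub_pos.mpr hxy) key
    simp only [hNdef]
    nlinarith [hprod]
  have hcont : ContinuousOn N (Set.Icc (-2*b) 0) := by
    apply Continuous.continuousOn
    simp only [hNdef]
    continuity
  have hN0 : N 0 < 0 := by
    simp only [hNdef]
    nlinarith [pow_pos hb0 5]
  have hN2b : 0 < N (-2*b) := by
    simp only [hNdef]
    nlinarith [pow_pos hb0 3, mul_pos (pow_pos hb0 3) (sub_pos.mpr (by nlinarith : 3*b^2 < 2))]
  have h2b0 : (-2*b) ≤ (0:ℝ) := by linarith
  obtain ⟨x₀, hx₀mem, hNx₀⟩ := intermediate_value_Ioo' h2b0 hcont ⟨hN0, hN2b⟩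
  have heq : ∀ x : ℝ, x < 0 →
      ((-1 / x - (x ^ 2 - 5 * b * x + 13 * b ^ 2) / (9 * b ^ 3 * (x - b) ^ 2) = 0) ↔ N x = 0) := by
    intro x hx
    have hx0 : x ≠ 0 := ne_of_lt hx
    have hxb : x - b ≠ 0 := ne_of_lt (by linarith)
    have hb' : b ≠ 0 := ne_of_gt hb0
    have hrepr : -1 / x - (x ^ 2 - 5 * b * x + 13 * b ^ 2) / (9 * b ^ 3 * (x - b) ^ 2)
        = N x / (9 * b ^ 3 * x * (x - b) ^ 2) := by
      simp only [hNdef]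
      field_simp
      ring
    rw [hrepr, div_eq_zero_iff]
    have hden : 9 * b ^ 3 * x * (x - b) ^ 2 ≠ 0 := by positivity
    tauto
  refine ⟨x₀, hx₀mem.2, (heq x₀ hx₀mem.2).mpr hNx₀, hx₀mem.1, ?_⟩
  intro x hx hfx
  exact hanti.injective (((heq x hx).mp hfx).trans hNx₀.symm)
end
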